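/- With respect to the degree reverse lexicographic order induced by x_1 > x_2 > x_3 > x_4, the initial ideal of the defining ideal of the Backelin curve is generated by the monomials x_2x_3^3, x_1^{n−i}x_3^{3i−1} (1 ≤ i ≤ n), x_1^{r−n+3+j}x_2^{n−1−j} (0 ≤ j ≤ n−1), x_1^{r−2n+3+j}x_2^{2n−j} (0 ≤ j ≤ n−1), x_1^{r−n+2}x_2^{n}x_3, x_2^{n+1}x_3, x_2^{2n+1}; in particular x_4 divides no minimal generator of the initial ideal. -/

import Mathlib

open MvPolynomial

/-- The degree reverse lexicographic order on monomials in `m` variables, where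
`v` lists the variables from greatest to least. -/
def DegRevLexLT {m : ℕ} (v : Fin m → Fin m) (a b : Fin m →₀ ℕ) : Prop :=
  (a.sum fun _ e => e) < (b.sum fun _ e => e) ∨
    ((a.sum fun _ e => e) = (b.sum fun _ e => e) ∧
      ∃ p : Fin m, b (v p) < a (v p) ∧ ∀ q : Fin m, p < q → a (v q) = b (v q))

/-- `μ` is the leading monomial of `f` with respect to `ord`. -/
def IsLeadMonomial {σ : Type*} {k : Type*} [CommSemiring k]
    (ord : (σ →₀ ℕ) → (σ →₀ ℕ) → Prop) (f : MvPolynomial σ k) (μ : σ →₀ ℕ) : Prop :=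
  μ ∈ f.support ∧ ∀ μ' ∈ f.support, μ' ≠ μ → ord μ' μ

/-- The initial ideal of `I` with respect to `ord`: the ideal generated by the
leading monomials of the nonzero elements of `I`. -/
noncomputable def InitialIdeal {σ : Type*} {k : Type*} [CommSemiring k]
    (ord : (σ →₀ ℕ) → (σ →₀ ℕ) → Prop) (I : Ideal (MvPolynomial σ k)) :
    Ideal (MvPolynomial σ k) :=
  Ideal.span {q | ∃ f ∈ I, f ≠ 0 ∧ ∃ μ, IsLeadMonomial ord f μ ∧ q = monomial μ (1 : k)}

set_option linter.unusedSectionVars false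
set_option linter.unusedVariables false

namespace Backelin

abbrev drl : (Fin 4 →₀ ℕ) → (Fin 4 →₀ ℕ) → Prop := DegRevLexLT (id : Fin 4 → Fin 4)

noncomputable def deg (a : Fin 4 →₀ ℕ) : ℕ := a.sum fun _ e => e

noncomputable def expv (a b c d : ℕ) : Fin 4 →₀ ℕ :=
  Finsupp.single 0 a + Finsupp.single 1 b + Finsupp.single 2 c + Finsupp.single 3 d

def wt (n r : ℕ) (μ : Fin 4 →₀ ℕ) : ℕ :=
  letI s := r * (3 * n + 2) + 3
  s * μ 0 + (s + 3) * μ 1 + (s + 3 * n + 1) * μ 2 + (s + 3 * n + 2) * μ 3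

def wtC (n r a b c d : ℕ) : ℕ :=
  (r * (3 * n + 2) + 3) * (a + b + c + d) + 3 * b + (3 * n + 1) * c + (3 * n + 2) * d


lemma deg_eq (a : Fin 4 →₀ ℕ) : deg a = a 0 + a 1 + a 2 + a 3 := by
  classical
  have : deg a = ∑ i : Fin 4, a i := by
    rw [deg, Finsupp.sum_fintype]
    intro i; rfl
  rw [this, Fin.sum_univ_four]

lemma drl_def (a b : Fin 4 →₀ ℕ) : drl a b ↔
    (deg a < deg b ∨ (deg a = deg b ∧
      ∃ p : Fin 4, b p < a p ∧ ∀ q : Fin 4, p < q → a q = b q)) := by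
  unfold drl DegRevLexLT deg
  simp only [id]

lemma drl_irrefl (a : Fin 4 →₀ ℕ) : ¬ drl a a := by
  rw [drl_def]
  rintro (h | ⟨-, p, h, -⟩) <;> exact lt_irrefl _ h

lemma drl_trans {a b c : Fin 4 →₀ ℕ} (h1 : drl a b) (h2 : drl b c) : drl a c := by
  rw [drl_def] at *
  rcases h1 with h1 | ⟨e1, p, hp, hpa⟩
  · rcases h2 with h2 | ⟨e2, _⟩
    · exact Or.inl (h1.trans h2)
    · exact Or.inl (e2 ▸ h1)
  · rcases h2 with h2 | ⟨e2, q, hq, hqa⟩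
    · exact Or.inl (e1 ▸ h2)
    · refine Or.inr ⟨e1.trans e2, ?_⟩
      rcases lt_trichotomy p q with h | h | h
      · exact ⟨q, by rw [hpa q h]; exact hq, fun t ht => (hpa t (h.trans ht)).trans (hqa t ht)⟩
      · subst h
        exact ⟨p, lt_trans hq hp, fun t ht => (hpa t ht).trans (hqa t ht)⟩
      · exact ⟨p, by rw [← hqa p h]; exact ⟨hp, fun t ht => (hpa t ht).trans (hqa t (h.trans ht))⟩⟩

lemma drl_add {a b : Fin 4 →₀ ℕ} (e : Fin 4 →₀ ℕ) (h : drl a b) : drl (a + e) (b + e) := by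
  rw [drl_def] at *
  have hd : ∀ x : Fin 4 →₀ ℕ, deg (x + e) = deg x + deg e := by
    intro x; simp only [deg_eq, Finsupp.add_apply]; ring
  rcases h with h | ⟨he, p, hp, hpa⟩
  · exact Or.inl (by rw [hd, hd]; omega)
  · refine Or.inr ⟨by rw [hd, hd, he], p, ?_, fun q hq => ?_⟩
    · simpa [Finsupp.add_apply] using hp
    · have := hpa q hq; simp [Finsupp.add_apply, this]

lemma expv_apply0 (a b c d : ℕ) : expv a b c d 0 = a := by simp [expv, Finsupp.single_apply]
lemma expv_apply1 (a b c d : ℕ) : expv a b c d 1 = b := by simp [expv, Finsupp.single_apply]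
lemma expv_apply2 (a b c d : ℕ) : expv a b c d 2 = c := by simp [expv, Finsupp.single_apply]
lemma expv_apply3 (a b c d : ℕ) : expv a b c d 3 = d := by simp [expv, Finsupp.single_apply]

lemma expv_eq_self (μ : Fin 4 →₀ ℕ) : expv (μ 0) (μ 1) (μ 2) (μ 3) = μ := by
  ext x
  fin_cases x
  · exact expv_apply0 _ _ _ _
  · exact expv_apply1 _ _ _ _
  · exact expv_apply2 _ _ _ _
  · exact expv_apply3 _ _ _ _

lemma expv_add (a b c d a' b' c' d' : ℕ) :
    expv a b c d + expv a' b' c' d' = expv (a + a') (b + b') (c + c') (d + d') := by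
  ext x; fin_cases x <;> simp [expv, Finsupp.single_apply]

lemma monomial_expv {k : Type*} [CommSemiring k] (a b c d : ℕ) :
    (monomial (expv a b c d) (1 : k)) = X 0 ^ a * X 1 ^ b * X 2 ^ c * X 3 ^ d := by
  rw [expv, X_pow_eq_monomial, X_pow_eq_monomial, X_pow_eq_monomial, X_pow_eq_monomial,
    monomial_mul, monomial_mul, monomial_mul, one_mul, one_mul, one_mul]

lemma deg_expv (a b c d : ℕ) : deg (expv a b c d) = a + b + c + d := by
  rw [deg_eq, expv_apply0, expv_apply1, expv_apply2, expv_apply3]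

lemma wt_expv (n r a b c d : ℕ) : wt n r (expv a b c d) = wtC n r a b c d := by
  rw [wt, wtC, expv_apply0, expv_apply1, expv_apply2, expv_apply3]; ring

lemma wt_eq_wtC (n r : ℕ) (μ : Fin 4 →₀ ℕ) : wt n r μ = wtC n r (μ 0) (μ 1) (μ 2) (μ 3) := by
  rw [wt, wtC]; ring

lemma wt_add (n r : ℕ) (x y : Fin 4 →₀ ℕ) : wt n r (x + y) = wt n r x + wt n r y := by
  simp only [wt, Finsupp.add_apply]; ring

lemma drl_of_deg_lt {a b : Fin 4 →₀ ℕ} (h : deg a < deg b) : drl a b :=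
  (drl_def a b).mpr (Or.inl h)

lemma drl_of_deg_eq_d_lt {a' b' c' d' a b c d : ℕ}
    (hdeg : a' + b' + c' + d' = a + b + c + d) (hd : d < d') :
    drl (expv a' b' c' d') (expv a b c d) := by
  rw [drl_def]
  refine Or.inr ⟨by rw [deg_expv, deg_expv, hdeg], ⟨3, ?_, ?_⟩⟩
  · rw [expv_apply3, expv_apply3]; exact hd
  · intro q hq
    exact absurd hq (not_lt.mpr (Fin.le_last q))

section
variable (n r : ℕ) (hn : 2 ≤ n) (hr : 3 * n + 2 ≤ r)
include hn hr

-- family 1 : x2 x3^3  ↦  x1 x4^3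
lemma fam1_wt : wt n r (expv 0 1 3 0) = wt n r (expv 1 0 0 3) := by
  simp only [wt_expv, wtC]; ring
lemma fam1_lt : drl (expv 1 0 0 3) (expv 0 1 3 0) := drl_of_deg_eq_d_lt (by omega) (by omega)

-- family 2 (i) : x1^(n-i) x3^(3i-1) ↦ x2^(n-i+1) x4^(3i-2)
lemma fam2_wt (i : ℕ) (h1 : 1 ≤ i) (h2 : i ≤ n) :
    wt n r (expv (n - i) 0 (3 * i - 1) 0) = wt n r (expv 0 (n - i + 1) 0 (3 * i - 2)) := by
  obtain ⟨m, rfl⟩ : ∃ m, n = i + m := ⟨n - i, by omega⟩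
  obtain ⟨i', rfl⟩ : ∃ i', i = 1 + i' := ⟨i - 1, by omega⟩
  simp only [wt_expv, wtC]
  have e1 : 1 + i' + m - (1 + i') = m := by omega
  have e2 : 3 * (1 + i') - 1 = 3 * i' + 2 := by omega
  have e3 : 3 * (1 + i') - 2 = 3 * i' + 1 := by omega
  rw [e1, e2, e3]; ring
lemma fam2_lt (i : ℕ) (h1 : 1 ≤ i) (h2 : i ≤ n) :
    drl (expv 0 (n - i + 1) 0 (3 * i - 2)) (expv (n - i) 0 (3 * i - 1) 0) :=
  drl_of_deg_eq_d_lt (by omega) (by omega)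

-- family 3 (j) : x1^(r-n+3+j) x2^(n-1-j) ↦ x3^(3j+2) x4^(r-3j-1)
lemma fam3_wt (j : ℕ) (hj : j ≤ n - 1) :
    wt n r (expv (r - n + 3 + j) (n - 1 - j) 0 0) = wt n r (expv 0 0 (3*j+2) (r - 3*j - 1)) := by
  obtain ⟨m, rfl⟩ : ∃ m, n = j + 1 + m := ⟨n - 1 - j, by omega⟩
  obtain ⟨q, rfl⟩ : ∃ q, r = 3 * (j + 1 + m) + 2 + q := ⟨r - (3*(j+1+m)+2), by omega⟩
  simp only [wt_expv, wtC]
  have e1 : 3 * (j + 1 + m) + 2 + q - (j + 1 + m) + 3 + j = 3 * j + 2 * m + 7 + q := by omega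
  have e2 : j + 1 + m - 1 - j = m := by omega
  have e3 : 3 * (j + 1 + m) + 2 + q - 3 * j - 1 = 3 * m + 4 + q := by omega
  rw [e1, e2, e3]; ring
lemma fam3_lt (j : ℕ) (hj : j ≤ n - 1) :
    drl (expv 0 0 (3*j+2) (r - 3*j - 1)) (expv (r - n + 3 + j) (n - 1 - j) 0 0) := by
  apply drl_of_deg_lt; rw [deg_expv, deg_expv]; omega

-- family 4 (j) : x1^(r-2n+3+j) x2^(2n-j) ↦ x3^(3j+1) x4^(r+1-3j)
lemma fam4_wt (j : ℕ) (hj : j ≤ n - 1) :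
    wt n r (expv (r - 2*n + 3 + j) (2*n - j) 0 0) = wt n r (expv 0 0 (3*j+1) (r + 1 - 3*j)) := by
  obtain ⟨m, rfl⟩ : ∃ m, n = j + 1 + m := ⟨n - 1 - j, by omega⟩
  obtain ⟨q, rfl⟩ : ∃ q, r = 3 * (j + 1 + m) + 2 + q := ⟨r - (3*(j+1+m)+2), by omega⟩
  simp only [wt_expv, wtC]
  have e1 : 3 * (j + 1 + m) + 2 + q - 2 * (j + 1 + m) + 3 + j = 2 * j + m + 6 + q := by omega
  have e2 : 2 * (j + 1 + m) - j = j + 2 * m + 2 := by omega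
  have e3 : 3 * (j + 1 + m) + 2 + q + 1 - 3 * j = 3 * m + 6 + q := by omega
  rw [e1, e2, e3]; ring
lemma fam4_lt (j : ℕ) (hj : j ≤ n - 1) :
    drl (expv 0 0 (3*j+1) (r + 1 - 3*j)) (expv (r - 2*n + 3 + j) (2*n - j) 0 0) := by
  apply drl_of_deg_lt; rw [deg_expv, deg_expv]; omega

-- family 5 : x1^(r-n+2) x2^n x3 ↦ x4^(r+2)
lemma fam5_wt : wt n r (expv (r - n + 2) n 1 0) = wt n r (expv 0 0 0 (r + 2)) := by
  obtain ⟨q, rfl⟩ : ∃ q, r = 3 * n + 2 + q := ⟨r - (3*n+2), by omega⟩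
  simp only [wt_expv, wtC]
  have e1 : 3 * n + 2 + q - n + 2 = 2 * n + 4 + q := by omega
  rw [e1]; ring
lemma fam5_lt : drl (expv 0 0 0 (r + 2)) (expv (r - n + 2) n 1 0) := by
  apply drl_of_deg_lt; rw [deg_expv, deg_expv]; omega

-- family 6 : x2^(n+1) x3 ↦ x1^n x4^2
lemma fam6_wt : wt n r (expv 0 (n+1) 1 0) = wt n r (expv n 0 0 2) := by
  simp only [wt_expv, wtC]; ring
lemma fam6_lt : drl (expv n 0 0 2) (expv 0 (n+1) 1 0) := drl_of_deg_eq_d_lt (by omega) (by omega)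

-- family 7 : x2^(2n+1) ↦ x1^(2n-1) x3 x4
lemma fam7_wt : wt n r (expv 0 (2*n+1) 0 0) = wt n r (expv (2*n-1) 0 1 1) := by
  obtain ⟨m, rfl⟩ : ∃ m, n = 2 + m := ⟨n - 2, by omega⟩
  simp only [wt_expv, wtC]
  have e1 : 2 * (2 + m) - 1 = 2 * m + 3 := by omega
  rw [e1]; ring
lemma fam7_lt : drl (expv (2*n-1) 0 1 1) (expv 0 (2*n+1) 0 0) :=
  drl_of_deg_eq_d_lt (by omega) (by omega)
end

lemma decomp_helper (μ : Fin 4 →₀ ℕ) (a b c d : ℕ)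
    (h0 : a ≤ μ 0) (h1 : b ≤ μ 1) (h2 : c ≤ μ 2) (h3 : d ≤ μ 3) :
    ∃ e, μ = expv a b c d + e := by
  refine ⟨expv (μ 0 - a) (μ 1 - b) (μ 2 - c) (μ 3 - d), ?_⟩
  have ea : a + (μ 0 - a) = μ 0 := by omega
  have eb : b + (μ 1 - b) = μ 1 := by omega
  have ec : c + (μ 2 - c) = μ 2 := by omega
  have ed : d + (μ 3 - d) = μ 3 := by omega
  rw [expv_add, ea, eb, ec, ed, expv_eq_self]

def GenOf (n r : ℕ) (g : Fin 4 →₀ ℕ) : Prop :=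
  g = expv 0 1 3 0 ∨
  (∃ i, 1 ≤ i ∧ i ≤ n ∧ g = expv (n - i) 0 (3 * i - 1) 0) ∨
  (∃ j, j ≤ n - 1 ∧ g = expv (r - n + 3 + j) (n - 1 - j) 0 0) ∨
  (∃ j, j ≤ n - 1 ∧ g = expv (r - 2*n + 3 + j) (2*n - j) 0 0) ∨
  g = expv (r - n + 2) n 1 0 ∨
  g = expv 0 (n + 1) 1 0 ∨
  g = expv 0 (2*n + 1) 0 0

def Std (n r : ℕ) (μ : Fin 4 →₀ ℕ) : Prop :=
  ¬(1 ≤ μ 1 ∧ 3 ≤ μ 2) ∧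
  (∀ i, 1 ≤ i → i ≤ n → ¬(n - i ≤ μ 0 ∧ 3*i - 1 ≤ μ 2)) ∧
  (∀ j, j ≤ n - 1 → ¬(r - n + 3 + j ≤ μ 0 ∧ n - 1 - j ≤ μ 1)) ∧
  (∀ j, j ≤ n - 1 → ¬(r - 2*n + 3 + j ≤ μ 0 ∧ 2*n - j ≤ μ 1)) ∧
  ¬(r - n + 2 ≤ μ 0 ∧ n ≤ μ 1 ∧ 1 ≤ μ 2) ∧
  ¬(n + 1 ≤ μ 1 ∧ 1 ≤ μ 2) ∧
  μ 1 ≤ 2*n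

lemma nonStd_decomp {n r : ℕ} {μ : Fin 4 →₀ ℕ} (h : ¬ Std n r μ) :
    ∃ g, GenOf n r g ∧ ∃ e, μ = g + e := by
  classical
  by_cases h1 : 1 ≤ μ 1 ∧ 3 ≤ μ 2
  · exact ⟨_, Or.inl rfl, decomp_helper μ _ _ _ _ (by omega) h1.1 h1.2 (by omega)⟩
  by_cases h2 : ∃ i, 1 ≤ i ∧ i ≤ n ∧ n - i ≤ μ 0 ∧ 3*i - 1 ≤ μ 2
  · obtain ⟨i, hi1, hi2, hi3, hi4⟩ := h2
    exact ⟨_, Or.inr (Or.inl ⟨i, hi1, hi2, rfl⟩),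
      decomp_helper μ _ _ _ _ hi3 (by omega) hi4 (by omega)⟩
  by_cases h3 : ∃ j, j ≤ n - 1 ∧ r - n + 3 + j ≤ μ 0 ∧ n - 1 - j ≤ μ 1
  · obtain ⟨j, hj1, hj2, hj3⟩ := h3
    exact ⟨_, Or.inr (Or.inr (Or.inl ⟨j, hj1, rfl⟩)),
      decomp_helper μ _ _ _ _ hj2 hj3 (by omega) (by omega)⟩
  by_cases h4 : ∃ j, j ≤ n - 1 ∧ r - 2*n + 3 + j ≤ μ 0 ∧ 2*n - j ≤ μ 1
  · obtain ⟨j, hj1, hj2, hj3⟩ := h4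
    exact ⟨_, Or.inr (Or.inr (Or.inr (Or.inl ⟨j, hj1, rfl⟩))),
      decomp_helper μ _ _ _ _ hj2 hj3 (by omega) (by omega)⟩
  by_cases h5 : r - n + 2 ≤ μ 0 ∧ n ≤ μ 1 ∧ 1 ≤ μ 2
  · exact ⟨_, Or.inr (Or.inr (Or.inr (Or.inr (Or.inl rfl)))),
      decomp_helper μ _ _ _ _ h5.1 h5.2.1 h5.2.2 (by omega)⟩
  by_cases h6 : n + 1 ≤ μ 1 ∧ 1 ≤ μ 2
  · exact ⟨_, Or.inr (Or.inr (Or.inr (Or.inr (Or.inr (Or.inl rfl))))),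
      decomp_helper μ _ _ _ _ (by omega) h6.1 h6.2 (by omega)⟩
  by_cases h7 : 2*n + 1 ≤ μ 1
  · exact ⟨_, Or.inr (Or.inr (Or.inr (Or.inr (Or.inr (Or.inr rfl))))),
      decomp_helper μ _ _ _ _ (by omega) h7 (by omega) (by omega)⟩
  exact absurd ⟨h1, fun i a b c => h2 ⟨i, a, b, c⟩, fun j a b => h3 ⟨j, a, b⟩,
    fun j a b => h4 ⟨j, a, b⟩, h5, h6, by omega⟩ h

lemma std_facts {n r : ℕ} (hn : 2 ≤ n) (hr : 3*n+2 ≤ r) {μ : Fin 4 →₀ ℕ}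
    (h : Std n r μ) :
    (1 ≤ μ 1 → μ 2 ≤ 2) ∧
    (n - 1 ≤ μ 0 → μ 2 ≤ 1) ∧
    (μ 2 ≤ 3*n - 2) ∧
    (μ 0 + 1 ≤ n → 3*(μ 0) + μ 2 ≤ 3*n - 2) ∧
    (μ 1 ≤ n - 1 → μ 0 + μ 1 ≤ r + 1) ∧
    (n - 1 ≤ μ 1 → μ 0 ≤ r - n + 2) ∧
    (n + 1 ≤ μ 1 → μ 0 + μ 1 ≤ r + 2) ∧
    (¬(r - n + 2 ≤ μ 0 ∧ n ≤ μ 1 ∧ 1 ≤ μ 2)) ∧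
    (n + 1 ≤ μ 1 → μ 2 = 0) ∧
    (μ 1 ≤ 2*n) ∧
    (μ 0 ≤ r + 1) ∧
    (μ 0 + μ 1 ≤ r + 2) ∧
    (μ 0 + μ 1 + μ 2 ≤ r + 4) := by
  obtain ⟨h1, h2, h3, h4, h5, h6, h7⟩ := h
  have i1 := h2 1 (by omega) (by omega)
  have i2 := h2 n (by omega) le_rfl
  have i3 : μ 0 + 1 ≤ n → 3*(μ 0) + μ 2 ≤ 3*n - 2 := by
    intro ha; have := h2 (n - μ 0) (by omega) (by omega); omega
  have i4 : μ 1 ≤ n - 1 → μ 0 + μ 1 ≤ r + 1 := by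
    intro hb; have := h3 (n - 1 - μ 1) (by omega); omega
  have i5 := h3 0 (by omega)
  have i6 : n + 1 ≤ μ 1 → μ 0 + μ 1 ≤ r + 2 := by
    intro hb; have := h4 (2*n - μ 1) (by omega); omega
  have i7 := h3 (n-1) le_rfl
  have i8 : n + 1 ≤ μ 1 → μ 2 = 0 := by intro hb; have := h6; omega
  refine ⟨?_, ?_, ?_, i3, i4, ?_, i6, h5, i8, h7, ?_, ?_, ?_⟩ <;> omega

lemma phi_mono (K4 dg dg' D D' : ℕ) (hD : D ≤ K4 - 1) (hD' : D' ≤ K4 - 1) (hK : 1 ≤ K4)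
    (h : dg' < dg ∨ (dg' = dg ∧ D < D')) :
    dg'*K4 + (K4 - 1 - D') < dg*K4 + (K4 - 1 - D) := by
  rcases h with h | ⟨rfl, h⟩
  · have : (dg' + 1) * K4 ≤ dg * K4 := Nat.mul_le_mul_right _ (by omega)
    have h2 : dg' * K4 + K4 = (dg' + 1) * K4 := by ring
    omega
  · omega

lemma dig3 (K x3 x2 x1 x0 y3 y2 y1 y0 : ℕ)
    (hx2 : x2 < K) (hx1 : x1 < K) (hx0 : x0 < K) (h : x3 < y3) :
    x3*K^3 + x2*K^2 + x1*K + x0 < y3*K^3 + y2*K^2 + y1*K + y0 := by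
  have e1 : (x2+1) * K^2 ≤ K * K^2 := Nat.mul_le_mul_right _ (by omega)
  have e2 : (x1+1) * K ≤ K * K := Nat.mul_le_mul_right _ (by omega)
  have e3 : (x3+1) * K^3 ≤ y3 * K^3 := Nat.mul_le_mul_right _ (by omega)
  nlinarith [e1, e2, e3]

lemma dig2 (K x3 x2 x1 x0 y3 y2 y1 y0 : ℕ)
    (hx1 : x1 < K) (hx0 : x0 < K) (h3 : x3 = y3) (h : x2 < y2) :
    x3*K^3 + x2*K^2 + x1*K + x0 < y3*K^3 + y2*K^2 + y1*K + y0 := by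
  subst h3
  have e2 : (x1+1) * K ≤ K * K := Nat.mul_le_mul_right _ (by omega)
  have e3 : (x2+1) * K^2 ≤ y2 * K^2 := Nat.mul_le_mul_right _ (by omega)
  nlinarith [e2, e3]

lemma dig1 (K x3 x2 x1 x0 y3 y2 y1 y0 : ℕ)
    (hx0 : x0 < K) (h3 : x3 = y3) (h2 : x2 = y2) (h : x1 < y1) :
    x3*K^3 + x2*K^2 + x1*K + x0 < y3*K^3 + y2*K^2 + y1*K + y0 := by
  subst h3; subst h2
  have e3 : (x1+1) * K ≤ y1 * K := Nat.mul_le_mul_right _ (by omega)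
  nlinarith [e3]

lemma dig0 (K x3 x2 x1 x0 y3 y2 y1 y0 : ℕ)
    (h3 : x3 = y3) (h2 : x2 = y2) (h1 : x1 = y1) (h : x0 < y0) :
    x3*K^3 + x2*K^2 + x1*K + x0 < y3*K^3 + y2*K^2 + y1*K + y0 := by
  subst h3; subst h2; subst h1; omega

lemma dig_bound (K x3 x2 x1 x0 : ℕ) (hx3 : x3 < K) (hx2 : x2 < K) (hx1 : x1 < K) (hx0 : x0 < K) :
    x3*K^3 + x2*K^2 + x1*K + x0 ≤ K^4 - 1 := by
  have e3 : (x3+1)*K^3 ≤ K*K^3 := Nat.mul_le_mul_right _ (by omega)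
  have e2 : (x2+1)*K^2 ≤ K*K^2 := Nat.mul_le_mul_right _ (by omega)
  have e1 : (x1+1)*K ≤ K*K := Nat.mul_le_mul_right _ (by omega)
  have h : x3*K^3 + x2*K^2 + x1*K + x0 + 1 ≤ K^4 := by nlinarith [e3, e2, e1]
  omega

-- abstract integer helpers (small contexts, fast nlinarith)
lemma hlp_Sbig (N R : ℤ) (hN : 2 ≤ N) (hR : 3*N+2 ≤ R) :
    9*N^2 + 12*N + 7 ≤ R*(3*N+2)+3 := by nlinarith

lemma hlp_T0 (N B C : ℤ) (hN : 2 ≤ N) (hB0 : 0 ≤ B) (hB : B ≤ 2*N)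
    (hC0 : 0 ≤ C) (hC : C ≤ 3*N-2) :
    0 ≤ 3*B+(3*N+1)*C ∧ 3*B+(3*N+1)*C ≤ 9*N^2+3*N-2 := by
  constructor <;> nlinarith

lemma hlp_T2A (N A2 B C : ℤ) (hN : 2 ≤ N) (hA2 : 0 ≤ A2) (hB0 : 0 ≤ B)
    (hC0 : 0 ≤ C) (hsum : B + C ≤ A2) :
    3*B+(3*N+1)*C ≤ (3*N+1)*A2 := by nlinarith

lemma hlp_k (N R A A2 D T T2 : ℤ) (hN : 2 ≤ N) (hR : 3*N+2 ≤ R)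
    (hA : A ≤ R+4) (hA2 : 0 ≤ A2) (hD : 0 ≤ D)
    (hT : 0 ≤ T) (hTS : T ≤ 9*N^2+3*N-2) (hT2 : 0 ≤ T2) (hT2S : T2 ≤ 9*N^2+3*N-2)
    (hT2A : T2 ≤ (3*N+1)*A2)
    (E : (R*(3*N+2)+3) * (A - A2 - D) = (3*N+2)*D + T2 - T) :
    D ≤ A - A2 ∧ (A - A2 - D = 0 ∨ A - A2 - D = 1) := by
  have hSpos : (0:ℤ) < R*(3*N+2)+3 := by nlinarith
  have hSbig := hlp_Sbig N R hN hR
  have h1 : 0 ≤ A - A2 := by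
    by_contra hcon
    push_neg at hcon
    have h' : A - A2 - D ≤ -1 := by omega
    have hmul := mul_le_mul_of_nonneg_left h' (le_of_lt hSpos)
    have hprod : (0:ℤ) ≤ (3*N+2) * D := mul_nonneg (by linarith) hD
    linarith
  have h2 : D ≤ A - A2 := by
    by_contra hcon
    push_neg at hcon
    have h' : A - A2 + 1 ≤ D := by omega
    have hmul := mul_le_mul_of_nonneg_left h' (by nlinarith : (0:ℤ) ≤ R*(3*N+2)+3+3*N+2)
    have hprod : (0:ℤ) ≤ (3*N+2) * (A - A2) := mul_nonneg (by linarith) h1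
    nlinarith
  have h3 : A - A2 - D ≤ 1 := by
    by_contra hcon
    push_neg at hcon
    have h' : (2:ℤ) ≤ A - A2 - D := by omega
    have hmul := mul_le_mul_of_nonneg_left h' (le_of_lt hSpos)
    have hp1 : (3*N+2) * D ≤ (3*N+2) * (A - A2) := mul_le_mul_of_nonneg_left h2 (by linarith)
    have hp3 : (3*N+2) * A ≤ (3*N+2) * (R+4) := mul_le_mul_of_nonneg_left hA (by linarith)
    nlinarith
  have h0 : 0 ≤ A - A2 - D := by
    by_contra hcon
    push_neg at hcon
    omega
  exact ⟨h2, by omega⟩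

lemma hlp_e0 (N D β γ : ℤ) (hN : 2 ≤ N) (hD : 0 ≤ D)
    (hβl : -(2*N) ≤ β) (hβu : β ≤ 2*N) (hγl : -(3*N-2) ≤ γ) (hγu : γ ≤ 3*N-2)
    (E : (3*N+2)*D = 3*β + (3*N+1)*γ) :
    -1 ≤ γ - D ∧ γ - D ≤ 2 := by
  have hDu : D ≤ 3*N - 1 := by nlinarith
  have E' : (3*N+1)*(γ - D) = D - 3*β := by linarith
  constructor
  · nlinarith
  · nlinarith

lemma hlp_e1 (N R D A A2 β γ : ℤ) (hN : 2 ≤ N) (hR : 3*N+2 ≤ R) (hD : 0 ≤ D)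
    (hβl : -(2*N) ≤ β) (hβu : β ≤ 2*N) (hγl : -(3*N-2) ≤ γ) (hγu : γ ≤ 3*N-2)
    (hA : A ≤ R+4) (hA2 : 0 ≤ A2) (hk : A - A2 - D = 1)
    (E : (3*N+2)*(D - R) = 3 + 3*β + (3*N+1)*γ) :
    -3 ≤ γ - (D - R) ∧ γ - (D - R) ≤ 1 := by
  have hεu : D - R ≤ 3 := by omega
  have hεl : -(3*N) ≤ D - R := by nlinarith
  have E' : (3*N+1)*(γ - (D - R)) = (D - R) - 3 - 3*β := by linarith
  constructor
  · nlinarith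
  · nlinarith

-- k=0 cases; δ := d2-d, β := b-b2, γ := c-c2
-- e = γ - δ
lemma k0e0 (n r a b c d a2 b2 c2 d2 : ℕ)
    (t1 : 1 ≤ b → c ≤ 2)
    (hd : d ≤ d2)
    (hk : ((a:ℤ)+b+c) - ((a2:ℤ)+b2+c2) - ((d2:ℤ)-d) = 0)
    (hE : (3*(n:ℤ)+1) * (0:ℤ) = ((d2:ℤ)-d) - 3*((b:ℤ)-b2))
    (hv : ((c:ℤ)-c2) - ((d2:ℤ)-d) = 0) :
    a = a2 ∧ b = b2 ∧ c = c2 ∧ d = d2 := by omega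

lemma k0e1 (n r a b c d a2 b2 c2 d2 : ℕ)
    (t1 : 1 ≤ b → c ≤ 2) (t2 : n - 1 ≤ a → c ≤ 1)
    (t4 : a + 1 ≤ n → 3*a + c ≤ 3*n - 2)
    (hd : d ≤ d2)
    (hk : ((a:ℤ)+b+c) - ((a2:ℤ)+b2+c2) - ((d2:ℤ)-d) = 0)
    (hE : (3*(n:ℤ)+1) * (1:ℤ) = ((d2:ℤ)-d) - 3*((b:ℤ)-b2))
    (hv : ((c:ℤ)-c2) - ((d2:ℤ)-d) = 1) : False := by omega

lemma k0e2 (n r a b c d a2 b2 c2 d2 : ℕ)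
    (t2 : n - 1 ≤ a → c ≤ 1) (t3 : c ≤ 3*n - 2)
    (t4 : a + 1 ≤ n → 3*a + c ≤ 3*n - 2) (u9 : n + 1 ≤ b2 → c2 = 0)
    (hd : d ≤ d2)
    (hk : ((a:ℤ)+b+c) - ((a2:ℤ)+b2+c2) - ((d2:ℤ)-d) = 0)
    (hE : (3*(n:ℤ)+1) * (2:ℤ) = ((d2:ℤ)-d) - 3*((b:ℤ)-b2))
    (hv : ((c:ℤ)-c2) - ((d2:ℤ)-d) = 2) : False := by omega

lemma k0em1 (n r a b c d a2 b2 c2 d2 : ℕ)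
    (t9 : n + 1 ≤ b → c = 0)
    (hd : d ≤ d2)
    (hk : ((a:ℤ)+b+c) - ((a2:ℤ)+b2+c2) - ((d2:ℤ)-d) = 0)
    (hE : (3*(n:ℤ)+1) * (-1:ℤ) = ((d2:ℤ)-d) - 3*((b:ℤ)-b2))
    (hv : ((c:ℤ)-c2) - ((d2:ℤ)-d) = -1) : False := by omega

-- k=1 cases; ε := δ - r, e' = γ - ε
lemma k1e1 (n r a b c d a2 b2 c2 d2 : ℕ) (hn : 2 ≤ n)
    (t11 : a ≤ r + 1) (t13 : a + b + c ≤ r + 4)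
    (hd : d ≤ d2)
    (hk : ((a:ℤ)+b+c) - ((a2:ℤ)+b2+c2) - ((d2:ℤ)-d) = 1)
    (hE : (3*(n:ℤ)+1) * (1:ℤ) = (((d2:ℤ)-d) - r) - 3 - 3*((b:ℤ)-b2))
    (hv : ((c:ℤ)-c2) - (((d2:ℤ)-d) - (r:ℤ)) = 1) : False := by omega

lemma k1e0 (n r a b c d a2 b2 c2 d2 : ℕ) (hr : 3*n+2 ≤ r)
    (t1 : 1 ≤ b → c ≤ 2) (t2 : n - 1 ≤ a → c ≤ 1)
    (t4 : a + 1 ≤ n → 3*a + c ≤ 3*n - 2) (t11 : a ≤ r + 1) (t13 : a + b + c ≤ r + 4)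
    (hd : d ≤ d2)
    (hk : ((a:ℤ)+b+c) - ((a2:ℤ)+b2+c2) - ((d2:ℤ)-d) = 1)
    (hE : (3*(n:ℤ)+1) * (0:ℤ) = (((d2:ℤ)-d) - r) - 3 - 3*((b:ℤ)-b2))
    (hv : ((c:ℤ)-c2) - (((d2:ℤ)-d) - (r:ℤ)) = 0) : False := by omega

lemma k1em1 (n r a b c d a2 b2 c2 d2 : ℕ) (hr : 3*n+2 ≤ r)
    (t1 : 1 ≤ b → c ≤ 2) (t5 : b ≤ n - 1 → a + b ≤ r + 1)
    (t8 : ¬(r - n + 2 ≤ a ∧ n ≤ b ∧ 1 ≤ c)) (t9 : n + 1 ≤ b → c = 0)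
    (t11 : a ≤ r + 1) (t12 : a + b ≤ r + 2)
    (hd : d ≤ d2)
    (hk : ((a:ℤ)+b+c) - ((a2:ℤ)+b2+c2) - ((d2:ℤ)-d) = 1)
    (hE : (3*(n:ℤ)+1) * (-1:ℤ) = (((d2:ℤ)-d) - r) - 3 - 3*((b:ℤ)-b2))
    (hv : ((c:ℤ)-c2) - (((d2:ℤ)-d) - (r:ℤ)) = -1) : False := by omega

lemma k1em2 (n r a b c d a2 b2 c2 d2 : ℕ)
    (t1 : 1 ≤ b → c ≤ 2) (t7 : n + 1 ≤ b → a + b ≤ r + 2)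
    (t9 : n + 1 ≤ b → c = 0) (t11 : a ≤ r + 1) (u3 : c2 ≤ 3*n - 2)
    (hd : d ≤ d2)
    (hk : ((a:ℤ)+b+c) - ((a2:ℤ)+b2+c2) - ((d2:ℤ)-d) = 1)
    (hE : (3*(n:ℤ)+1) * (-2:ℤ) = (((d2:ℤ)-d) - r) - 3 - 3*((b:ℤ)-b2))
    (hv : ((c:ℤ)-c2) - (((d2:ℤ)-d) - (r:ℤ)) = -2) : False := by omega

lemma k1em3 (n r a b c d a2 b2 c2 d2 : ℕ) (hn : 2 ≤ n)
    (t10 : b ≤ 2*n) (u3 : c2 ≤ 3*n - 2)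
    (hd : d ≤ d2)
    (hk : ((a:ℤ)+b+c) - ((a2:ℤ)+b2+c2) - ((d2:ℤ)-d) = 1)
    (hE : (3*(n:ℤ)+1) * (-3:ℤ) = (((d2:ℤ)-d) - r) - 3 - 3*((b:ℤ)-b2))
    (hv : ((c:ℤ)-c2) - (((d2:ℤ)-d) - (r:ℤ)) = -3) : False := by omega


lemma cast3n2 (m : ℕ) (hm : 1 ≤ m) : ((3*m - 2 : ℕ) : ℤ) = 3*(m:ℤ) - 2 := by omega

lemma int_cases4 (x : ℤ) (h1 : -1 ≤ x) (h2 : x ≤ 2) : x = -1 ∨ x = 0 ∨ x = 1 ∨ x = 2 := by omega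
lemma int_cases5 (x : ℤ) (h1 : -3 ≤ x) (h2 : x ≤ 1) :
    x = -3 ∨ x = -2 ∨ x = -1 ∨ x = 0 ∨ x = 1 := by omega

set_option maxHeartbeats 1600000 in
lemma std_inj_core (n r : ℕ) (hn : 2 ≤ n) (hr : 3*n+2 ≤ r)
    (a b c d a2 b2 c2 d2 : ℕ)
    (t1 : 1 ≤ b → c ≤ 2) (t2 : n - 1 ≤ a → c ≤ 1) (t3 : c ≤ 3*n - 2)
    (t4 : a + 1 ≤ n → 3*a + c ≤ 3*n - 2)
    (t5 : b ≤ n - 1 → a + b ≤ r + 1) (t6 : n - 1 ≤ b → a ≤ r - n + 2)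
    (t7 : n + 1 ≤ b → a + b ≤ r + 2)
    (t8 : ¬(r - n + 2 ≤ a ∧ n ≤ b ∧ 1 ≤ c)) (t9 : n + 1 ≤ b → c = 0)
    (t10 : b ≤ 2*n) (t11 : a ≤ r + 1) (t12 : a + b ≤ r + 2) (t13 : a + b + c ≤ r + 4)
    (u1 : 1 ≤ b2 → c2 ≤ 2) (u2 : n - 1 ≤ a2 → c2 ≤ 1) (u3 : c2 ≤ 3*n - 2)
    (u4 : a2 + 1 ≤ n → 3*a2 + c2 ≤ 3*n - 2)
    (u5 : b2 ≤ n - 1 → a2 + b2 ≤ r + 1) (u6 : n - 1 ≤ b2 → a2 ≤ r - n + 2)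
    (u7 : n + 1 ≤ b2 → a2 + b2 ≤ r + 2)
    (u8 : ¬(r - n + 2 ≤ a2 ∧ n ≤ b2 ∧ 1 ≤ c2)) (u9 : n + 1 ≤ b2 → c2 = 0)
    (u10 : b2 ≤ 2*n) (u11 : a2 ≤ r + 1) (u12 : a2 + b2 ≤ r + 2) (u13 : a2 + b2 + c2 ≤ r + 4)
    (hd : d ≤ d2)
    (hw : wtC n r a b c d = wtC n r a2 b2 c2 d2) :
    a = a2 ∧ b = b2 ∧ c = c2 ∧ d = d2 := by
  have hwZ : ((r:ℤ) * (3 * (n:ℤ) + 2) + 3) * ((a:ℤ) + b + c + d) + 3 * (b:ℤ) + (3 * (n:ℤ) + 1) * c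
      + (3 * (n:ℤ) + 2) * d = ((r:ℤ) * (3 * (n:ℤ) + 2) + 3) * ((a2:ℤ) + b2 + c2 + d2) + 3 * (b2:ℤ)
      + (3 * (n:ℤ) + 1) * c2 + (3 * (n:ℤ) + 2) * d2 := by
    have h := congrArg (Nat.cast : ℕ → ℤ) hw
    unfold wtC at h
    push_cast at h
    linear_combination h
  have hN2 : (2:ℤ) ≤ (n:ℤ) := by exact_mod_cast hn
  have hR2 : 3*(n:ℤ) + 2 ≤ (r:ℤ) := by exact_mod_cast hr
  have zb0 : (0:ℤ) ≤ (b:ℤ) := Int.natCast_nonneg b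
  have zc0 : (0:ℤ) ≤ (c:ℤ) := Int.natCast_nonneg c
  have za20 : (0:ℤ) ≤ (a2:ℤ) := Int.natCast_nonneg a2
  have zb20 : (0:ℤ) ≤ (b2:ℤ) := Int.natCast_nonneg b2
  have zc20 : (0:ℤ) ≤ (c2:ℤ) := Int.natCast_nonneg c2
  have zb2n : (b:ℤ) ≤ 2*(n:ℤ) := by exact_mod_cast t10
  have zb22n : (b2:ℤ) ≤ 2*(n:ℤ) := by exact_mod_cast u10
  have zc3n : (c:ℤ) ≤ 3*(n:ℤ) - 2 := by
    have h3 : ((c:ℤ)) ≤ ((3*n - 2 : ℕ) : ℤ) := by exact_mod_cast t3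
    have h4 : ((3*n - 2 : ℕ) : ℤ) = 3*(n:ℤ) - 2 := cast3n2 n (le_trans one_le_two hn)
    linarith [h3, h4.le, h4.ge]
  have zc23n : (c2:ℤ) ≤ 3*(n:ℤ) - 2 := by
    have h3 : ((c2:ℤ)) ≤ ((3*n - 2 : ℕ) : ℤ) := by exact_mod_cast u3
    have h4 : ((3*n - 2 : ℕ) : ℤ) = 3*(n:ℤ) - 2 := cast3n2 n (le_trans one_le_two hn)
    linarith [h3, h4.le, h4.ge]
  have zA : (a:ℤ) + b + c ≤ (r:ℤ) + 4 := by
    have h3 : ((a:ℤ)+b+c) ≤ ((r + 4 : ℕ) : ℤ) := by exact_mod_cast t13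
    push_cast at h3
    linarith
  have hdel0 : (0:ℤ) ≤ (d2:ℤ) - d := by
    have h3 : (d:ℤ) ≤ d2 := by exact_mod_cast hd
    linarith
  have E2 : ((r:ℤ) * (3*(n:ℤ)+2) + 3) * (((a:ℤ)+b+c) - ((a2:ℤ)+b2+c2) - ((d2:ℤ)-d)) =
      (3*(n:ℤ)+2) * ((d2:ℤ)-d) + (3*(b2:ℤ)+(3*(n:ℤ)+1)*c2) - (3*(b:ℤ)+(3*(n:ℤ)+1)*c) := by
    linear_combination hwZ
  have hT0 := hlp_T0 (n:ℤ) (b:ℤ) (c:ℤ) hN2 zb0 zb2n zc0 zc3n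
  have hT02 := hlp_T0 (n:ℤ) (b2:ℤ) (c2:ℤ) hN2 zb20 zb22n zc20 zc23n
  have hT2A := hlp_T2A (n:ℤ) ((a2:ℤ)+b2+c2) (b2:ℤ) (c2:ℤ) hN2
    (by linarith) zb20 zc20 (by linarith)
  have hk := hlp_k (n:ℤ) (r:ℤ) ((a:ℤ)+b+c) ((a2:ℤ)+b2+c2) ((d2:ℤ)-d)
    (3*(b:ℤ)+(3*(n:ℤ)+1)*c) (3*(b2:ℤ)+(3*(n:ℤ)+1)*c2) hN2 hR2
    zA (by linarith) hdel0 hT0.1 hT0.2 hT02.1 hT02.2 hT2A E2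
  obtain ⟨hdel, hk01⟩ := hk
  rcases hk01 with hk0 | hk1
  · -- k = 0
    have E5 : (3*(n:ℤ)+2) * ((d2:ℤ)-d) = 3*((b:ℤ)-b2) + (3*(n:ℤ)+1)*((c:ℤ)-c2) := by
      linear_combination -E2 + ((r:ℤ) * (3*(n:ℤ)+2) + 3) * hk0
    have E4 : (3*(n:ℤ)+1) * (((c:ℤ)-c2) - ((d2:ℤ)-d)) = ((d2:ℤ)-d) - 3*((b:ℤ)-b2) := by
      linear_combination -E5
    have he := hlp_e0 (n:ℤ) ((d2:ℤ)-d) ((b:ℤ)-b2) ((c:ℤ)-c2) hN2 hdel0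
      (by linarith) (by linarith) (by linarith) (by linarith) E5
    have hv := int_cases4 _ he.1 he.2
    rcases hv with hv | hv | hv | hv <;> rw [hv] at E4
    · exact absurd E4 (by exact fun h => k0em1 n r a b c d a2 b2 c2 d2 t9 hd hk0 h hv)
    · exact k0e0 n r a b c d a2 b2 c2 d2 t1 hd hk0 E4 hv
    · exact absurd E4 (by exact fun h => k0e1 n r a b c d a2 b2 c2 d2 t1 t2 t4 hd hk0 h hv)
    · exact absurd E4 (by exact fun h => k0e2 n r a b c d a2 b2 c2 d2 t2 t3 t4 u9 hd hk0 h hv)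
  · -- k = 1
    exfalso
    have E6 : (3*(n:ℤ)+2) * (((d2:ℤ)-d) - (r:ℤ)) = 3 + 3*((b:ℤ)-b2) + (3*(n:ℤ)+1)*((c:ℤ)-c2) := by
      linear_combination -E2 + ((r:ℤ) * (3*(n:ℤ)+2) + 3) * hk1
    have E7 : (3*(n:ℤ)+1) * (((c:ℤ)-c2) - (((d2:ℤ)-d) - (r:ℤ))) =
        (((d2:ℤ)-d) - (r:ℤ)) - 3 - 3*((b:ℤ)-b2) := by
      linear_combination -E6
    have he := hlp_e1 (n:ℤ) (r:ℤ) ((d2:ℤ)-d) ((a:ℤ)+b+c) ((a2:ℤ)+b2+c2) ((b:ℤ)-b2) ((c:ℤ)-c2)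
      hN2 hR2 hdel0 (by linarith) (by linarith) (by linarith) (by linarith) zA (by linarith) hk1 E6
    have hv := int_cases5 _ he.1 he.2
    rcases hv with hv | hv | hv | hv | hv <;> rw [hv] at E7
    · exact k1em3 n r a b c d a2 b2 c2 d2 hn t10 u3 hd hk1 E7 hv
    · exact k1em2 n r a b c d a2 b2 c2 d2 t1 t7 t9 t11 u3 hd hk1 E7 hv
    · exact k1em1 n r a b c d a2 b2 c2 d2 hr t1 t5 t8 t9 t11 t12 hd hk1 E7 hv
    · exact k1e0 n r a b c d a2 b2 c2 d2 hr t1 t2 t4 t11 t13 hd hk1 E7 hv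
    · exact k1e1 n r a b c d a2 b2 c2 d2 hn t11 t13 hd hk1 E7 hv


section
variable (k : Type*) [Field k]

noncomputable def bvec (n r : ℕ) : Fin 4 → Polynomial k :=
  letI s := r * (3 * n + 2) + 3
  ![(Polynomial.X : Polynomial k) ^ s, Polynomial.X ^ (s + 3),
    Polynomial.X ^ (s + 3 * n + 1), Polynomial.X ^ (s + 3 * n + 2)]

noncomputable def Pideal (n r : ℕ) : Ideal (MvPolynomial (Fin 4) k) :=
  RingHom.ker (aeval (R := k) (bvec k n r)).toRingHom

def Mset (n r : ℕ) : Set (MvPolynomial (Fin 4) k) :=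
  {q | q = X 1 * X 2 ^ 3 ∨
    (∃ i, 1 ≤ i ∧ i ≤ n ∧ q = X 0 ^ (n - i) * X 2 ^ (3 * i - 1)) ∨
    (∃ j, j ≤ n - 1 ∧ q = X 0 ^ (r - n + 3 + j) * X 1 ^ (n - 1 - j)) ∨
    (∃ j, j ≤ n - 1 ∧ q = X 0 ^ (r - 2 * n + 3 + j) * X 1 ^ (2 * n - j)) ∨
    q = X 0 ^ (r - n + 2) * X 1 ^ n * X 2 ∨
    q = X 1 ^ (n + 1) * X 2 ∨
    q = X 1 ^ (2 * n + 1)}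

lemma mem_Pideal {n r : ℕ} {f : MvPolynomial (Fin 4) k} :
    f ∈ Pideal k n r ↔ aeval (bvec k n r) f = 0 := by
  rw [Pideal, RingHom.mem_ker]
  rfl

lemma aeval_monomial_wt (n r : ℕ) (μ : Fin 4 →₀ ℕ) (c : k) :
    aeval (bvec k n r) (monomial μ c) = Polynomial.C c * Polynomial.X ^ (wt n r μ) := by
  classical
  rw [aeval_monomial]
  have : (μ.prod fun i e => (bvec k n r) i ^ e) = ∏ i : Fin 4, (bvec k n r) i ^ μ i :=
    Finsupp.prod_fintype _ _ (fun i => pow_zero _)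
  rw [this, Fin.prod_univ_four]
  simp only [bvec, Matrix.cons_val_zero, Matrix.cons_val_one, Matrix.head_cons,
    Matrix.cons_val_two, Matrix.tail_cons, Matrix.cons_val_three]
  rw [← pow_mul, ← pow_mul, ← pow_mul, ← pow_mul, ← pow_add, ← pow_add, ← pow_add]
  rw [wt]
  rfl

lemma coeff_aeval (n r : ℕ) (f : MvPolynomial (Fin 4) k) (m : ℕ) :
    (aeval (bvec k n r) f).coeff m
      = ∑ μ ∈ f.support, if wt n r μ = m then f.coeff μ else 0 := by
  classical
  conv_lhs => rw [f.as_sum]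
  rw [map_sum, Polynomial.finset_sum_coeff]
  refine Finset.sum_congr rfl fun μ hμ => ?_
  rw [aeval_monomial_wt, Polynomial.coeff_C_mul, Polynomial.coeff_X_pow]
  by_cases h : wt n r μ = m
  · simp [h]
  · rw [if_neg h, if_neg (fun h' => h h'.symm), mul_zero]

lemma exists_partner {n r : ℕ} {f : MvPolynomial (Fin 4) k}
    (hf : aeval (bvec k n r) f = 0) {μ₀ : Fin 4 →₀ ℕ} (hμ₀ : μ₀ ∈ f.support) :
    ∃ ν ∈ f.support, ν ≠ μ₀ ∧ wt n r ν = wt n r μ₀ := by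
  classical
  by_contra hcon
  push_neg at hcon
  have h0 : (aeval (bvec k n r) f).coeff (wt n r μ₀) = 0 := by rw [hf]; simp
  rw [coeff_aeval] at h0
  rw [Finset.sum_eq_single μ₀] at h0
  · simp only [if_pos rfl] at h0
    exact (mem_support_iff.mp hμ₀) h0
  · intro ν hν hne
    rw [if_neg (hcon ν hν hne)]
  · intro h; exact absurd hμ₀ h

lemma gen_partner (n r : ℕ) (hn : 2 ≤ n) (hr : 3 * n + 2 ≤ r) {g : Fin 4 →₀ ℕ}
    (hg : GenOf n r g) : ∃ g', wt n r g = wt n r g' ∧ drl g' g := by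
  rcases hg with h | ⟨i, h1, h2, h⟩ | ⟨j, h1, h⟩ | ⟨j, h1, h⟩ | h | h | h
  · exact h ▸ ⟨_, fam1_wt n r hn hr, fam1_lt n r hn hr⟩
  · exact h ▸ ⟨_, fam2_wt n r hn hr i h1 h2, fam2_lt n r hn hr i h1 h2⟩
  · exact h ▸ ⟨_, fam3_wt n r hn hr j h1, fam3_lt n r hn hr j h1⟩
  · exact h ▸ ⟨_, fam4_wt n r hn hr j h1, fam4_lt n r hn hr j h1⟩
  · exact h ▸ ⟨_, fam5_wt n r hn hr, fam5_lt n r hn hr⟩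
  · exact h ▸ ⟨_, fam6_wt n r hn hr, fam6_lt n r hn hr⟩
  · exact h ▸ ⟨_, fam7_wt n r hn hr, fam7_lt n r hn hr⟩

lemma nonStd_partner (n r : ℕ) (hn : 2 ≤ n) (hr : 3 * n + 2 ≤ r) {μ : Fin 4 →₀ ℕ}
    (h : ¬ Std n r μ) : ∃ ν, wt n r ν = wt n r μ ∧ drl ν μ := by
  obtain ⟨g, hgen, e, hμ⟩ := nonStd_decomp h
  obtain ⟨g', hwt, hlt⟩ := gen_partner n r hn hr hgen
  subst hμ
  exact ⟨g' + e, by rw [wt_add, wt_add, hwt], drl_add e hlt⟩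

lemma le_wt (n r : ℕ) (ν : Fin 4 →₀ ℕ) :
    ν 0 ≤ wt n r ν ∧ ν 1 ≤ wt n r ν ∧ ν 2 ≤ wt n r ν ∧ ν 3 ≤ wt n r ν ∧
      deg ν ≤ wt n r ν := by
  have h0 : ν 0 ≤ (r * (3*n+2) + 3) * ν 0 := Nat.le_mul_of_pos_left _ (by positivity)
  have h1 : ν 1 ≤ ((r * (3*n+2) + 3) + 3) * ν 1 := Nat.le_mul_of_pos_left _ (by positivity)
  have h2 : ν 2 ≤ ((r * (3*n+2) + 3) + 3*n + 1) * ν 2 := Nat.le_mul_of_pos_left _ (by positivity)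
  have h3 : ν 3 ≤ ((r * (3*n+2) + 3) + 3*n + 2) * ν 3 := Nat.le_mul_of_pos_left _ (by positivity)
  rw [deg_eq]
  unfold wt
  refine ⟨by linarith, by linarith, by linarith, by linarith, by linarith⟩

noncomputable def phim (m : ℕ) (ν : Fin 4 →₀ ℕ) : ℕ :=
  deg ν * (m+1)^4 + ((m+1)^4 - 1 - (ν 3 * (m+1)^3 + ν 2 * (m+1)^2 + ν 1 * (m+1) + ν 0))

lemma phim_lt (n r : ℕ) {m : ℕ} {ν ν' : Fin 4 →₀ ℕ}
    (hν : wt n r ν = m) (hν' : wt n r ν' = m) (h : drl ν' ν) : phim m ν' < phim m ν := by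
  have B := le_wt n r ν; rw [hν] at B
  have B' := le_wt n r ν'; rw [hν'] at B'
  obtain ⟨b0, b1, b2, b3, bd⟩ := B
  obtain ⟨b0', b1', b2', b3', bd'⟩ := B'
  have hKb := dig_bound (m+1) (ν 3) (ν 2) (ν 1) (ν 0) (by omega) (by omega) (by omega) (by omega)
  have hKb' := dig_bound (m+1) (ν' 3) (ν' 2) (ν' 1) (ν' 0) (by omega) (by omega) (by omega) (by omega)
  rw [drl_def] at h
  unfold phim
  apply phi_mono _ _ _ _ _ hKb hKb' (Nat.one_le_pow _ _ (by omega))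
  rcases h with h | ⟨hdeg, p, hp, hpa⟩
  · exact Or.inl h
  · refine Or.inr ⟨hdeg, ?_⟩
    fin_cases p
    · exact dig0 (m+1) _ _ _ _ _ _ _ _ ((hpa 3 (by decide)).symm) ((hpa 2 (by decide)).symm)
        ((hpa 1 (by decide)).symm) hp
    · exact dig1 (m+1) _ _ _ _ _ _ _ _ (by omega) ((hpa 3 (by decide)).symm)
        ((hpa 2 (by decide)).symm) hp
    · exact dig2 (m+1) _ _ _ _ _ _ _ _ (by omega) (by omega) ((hpa 3 (by decide)).symm) hp
    · exact dig3 (m+1) _ _ _ _ _ _ _ _ (by omega) (by omega) (by omega) hp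

lemma std_inj (n r : ℕ) (hn : 2 ≤ n) (hr : 3 * n + 2 ≤ r) {μ ν : Fin 4 →₀ ℕ}
    (hμ : Std n r μ) (hν : Std n r ν) (hw : wt n r μ = wt n r ν) : μ = ν := by
  obtain ⟨f1, f2, f3, f4, f5, f6, f7, f8, f9, f10, f11, f12, f13⟩ := std_facts hn hr hμ
  obtain ⟨g1, g2, g3, g4, g5, g6, g7, g8, g9, g10, g11, g12, g13⟩ := std_facts hn hr hν
  rw [wt_eq_wtC, wt_eq_wtC] at hw
  rcases le_total (μ 3) (ν 3) with hd | hd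
  · obtain ⟨e0, e1, e2, e3⟩ := std_inj_core n r hn hr (μ 0) (μ 1) (μ 2) (μ 3)
      (ν 0) (ν 1) (ν 2) (ν 3) f1 f2 f3 f4 f5 f6 f7 f8 f9 f10 f11 f12 f13
      g1 g2 g3 g4 g5 g6 g7 g8 g9 g10 g11 g12 g13 hd hw
    rw [← expv_eq_self μ, ← expv_eq_self ν, e0, e1, e2, e3]
  · obtain ⟨e0, e1, e2, e3⟩ := std_inj_core n r hn hr (ν 0) (ν 1) (ν 2) (ν 3)
      (μ 0) (μ 1) (μ 2) (μ 3) g1 g2 g3 g4 g5 g6 g7 g8 g9 g10 g11 g12 g13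
      f1 f2 f3 f4 f5 f6 f7 f8 f9 f10 f11 f12 f13 hd hw.symm
    rw [← expv_eq_self μ, ← expv_eq_self ν, e0, e1, e2, e3]

lemma std_min (n r : ℕ) (hn : 2 ≤ n) (hr : 3 * n + 2 ≤ r) {μ : Fin 4 →₀ ℕ}
    (hμ : Std n r μ) {ν : Fin 4 →₀ ℕ} (hw : wt n r ν = wt n r μ) (hlt : drl ν μ) : False := by
  suffices H : ∀ t ν', phim (wt n r μ) ν' = t → wt n r ν' = wt n r μ → drl ν' μ → False from
    H (phim (wt n r μ) ν) ν rfl hw hlt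
  intro t
  induction t using Nat.strong_induction_on with
  | _ t IH =>
    intro ν' hphi hw' hlt'
    by_cases hstd : Std n r ν'
    · have hμν : μ = ν' := std_inj n r hn hr hμ hstd (by rw [hw'])
      exact drl_irrefl μ (hμν ▸ hlt')
    · obtain ⟨ν'', hwt'', hlt''⟩ := nonStd_partner n r hn hr hstd
      exact IH (phim (wt n r μ) ν'') (by rw [← hphi]; exact phim_lt n r hw' (hwt''.trans hw') hlt'')
        ν'' rfl (hwt''.trans hw') (drl_trans hlt'' hlt')

lemma binomial_mem (n r : ℕ) (g g' : Fin 4 →₀ ℕ)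
    (hwt : wt n r g = wt n r g') (hlt : drl g' g) :
    monomial g (1:k) ∈ {q : MvPolynomial (Fin 4) k |
      ∃ f ∈ Pideal k n r, f ≠ 0 ∧ ∃ μ, IsLeadMonomial drl f μ ∧ q = monomial μ (1 : k)} := by
  classical
  have hne : g ≠ g' := fun h => drl_irrefl g (h ▸ hlt)
  set f : MvPolynomial (Fin 4) k := monomial g 1 - monomial g' 1 with hf
  have hcg : f.coeff g = 1 := by
    rw [hf, coeff_sub, coeff_monomial, coeff_monomial, if_pos rfl, if_neg (Ne.symm hne), sub_zero]
  have hsupp : f.support ⊆ {g} ∪ {g'} := by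
    intro x hx
    rw [mem_support_iff] at hx
    by_contra hmem
    simp only [Finset.mem_union, Finset.mem_singleton, not_or] at hmem
    rw [hf, coeff_sub, coeff_monomial, coeff_monomial, if_neg (Ne.symm hmem.1),
      if_neg (Ne.symm hmem.2), sub_zero] at hx
    exact hx rfl
  have hgmem : g ∈ f.support := mem_support_iff.mpr (by rw [hcg]; exact one_ne_zero)
  refine ⟨f, ?_, ?_, g, ⟨hgmem, ?_⟩, rfl⟩
  · rw [mem_Pideal, hf, map_sub, aeval_monomial_wt, aeval_monomial_wt, hwt, sub_self]
  · intro h0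
    rw [h0] at hcg
    simp at hcg
  · intro μ' hμ' hne'
    have := hsupp hμ'
    simp only [Finset.mem_union, Finset.mem_singleton] at this
    rcases this with h | h
    · exact absurd h hne'
    · exact h ▸ hlt

lemma genOf_mem_M (n r : ℕ) {g : Fin 4 →₀ ℕ} (hg : GenOf n r g) :
    (monomial g (1:k)) ∈ Mset k n r := by
  rcases hg with h | ⟨i, h1, h2, h⟩ | ⟨j, h1, h⟩ | ⟨j, h1, h⟩ | h | h | h
  · exact Or.inl (by rw [h, monomial_expv]; ring)
  · exact Or.inr (Or.inl ⟨i, h1, h2, by rw [h, monomial_expv]; ring⟩)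
  · exact Or.inr (Or.inr (Or.inl ⟨j, h1, by rw [h, monomial_expv]; ring⟩))
  · exact Or.inr (Or.inr (Or.inr (Or.inl ⟨j, h1, by rw [h, monomial_expv]; ring⟩)))
  · exact Or.inr (Or.inr (Or.inr (Or.inr (Or.inl (by rw [h, monomial_expv]; ring)))))
  · exact Or.inr (Or.inr (Or.inr (Or.inr (Or.inr (Or.inl (by rw [h, monomial_expv]; ring))))))
  · exact Or.inr (Or.inr (Or.inr (Or.inr (Or.inr (Or.inr (by rw [h, monomial_expv]; ring))))))

lemma M_sub_init (n r : ℕ) (hn : 2 ≤ n) (hr : 3 * n + 2 ≤ r) :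
    Mset k n r ⊆ {q : MvPolynomial (Fin 4) k |
      ∃ f ∈ Pideal k n r, f ≠ 0 ∧ ∃ μ, IsLeadMonomial drl f μ ∧ q = monomial μ (1 : k)} := by
  intro q hq
  rcases hq with h | ⟨i, h1, h2, h⟩ | ⟨j, h1, h⟩ | ⟨j, h1, h⟩ | h | h | h
  · rw [h, show (X 1 * X 2 ^ 3 : MvPolynomial (Fin 4) k) = monomial (expv 0 1 3 0) 1 by
      rw [monomial_expv]; ring]
    exact binomial_mem k n r _ _ (fam1_wt n r hn hr) (fam1_lt n r hn hr)
  · rw [h, show (X 0 ^ (n-i) * X 2 ^ (3*i-1) : MvPolynomial (Fin 4) k)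
        = monomial (expv (n-i) 0 (3*i-1) 0) 1 by rw [monomial_expv]; ring]
    exact binomial_mem k n r _ _ (fam2_wt n r hn hr i h1 h2) (fam2_lt n r hn hr i h1 h2)
  · rw [h, show (X 0 ^ (r-n+3+j) * X 1 ^ (n-1-j) : MvPolynomial (Fin 4) k)
        = monomial (expv (r-n+3+j) (n-1-j) 0 0) 1 by rw [monomial_expv]; ring]
    exact binomial_mem k n r _ _ (fam3_wt n r hn hr j h1) (fam3_lt n r hn hr j h1)
  · rw [h, show (X 0 ^ (r-2*n+3+j) * X 1 ^ (2*n-j) : MvPolynomial (Fin 4) k)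
        = monomial (expv (r-2*n+3+j) (2*n-j) 0 0) 1 by rw [monomial_expv]; ring]
    exact binomial_mem k n r _ _ (fam4_wt n r hn hr j h1) (fam4_lt n r hn hr j h1)
  · rw [h, show (X 0 ^ (r-n+2) * X 1 ^ n * X 2 : MvPolynomial (Fin 4) k)
        = monomial (expv (r-n+2) n 1 0) 1 by rw [monomial_expv]; ring]
    exact binomial_mem k n r _ _ (fam5_wt n r hn hr) (fam5_lt n r hn hr)
  · rw [h, show (X 1 ^ (n+1) * X 2 : MvPolynomial (Fin 4) k)
        = monomial (expv 0 (n+1) 1 0) 1 by rw [monomial_expv]; ring]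
    exact binomial_mem k n r _ _ (fam6_wt n r hn hr) (fam6_lt n r hn hr)
  · rw [h, show (X 1 ^ (2*n+1) : MvPolynomial (Fin 4) k)
        = monomial (expv 0 (2*n+1) 0 0) 1 by rw [monomial_expv]; ring]
    exact binomial_mem k n r _ _ (fam7_wt n r hn hr) (fam7_lt n r hn hr)

lemma init_eq_span (n r : ℕ) (hn : 2 ≤ n) (hr : 3 * n + 2 ≤ r) :
    InitialIdeal drl (Pideal k n r) = Ideal.span (Mset k n r) := by
  apply le_antisymm
  · rw [InitialIdeal, Ideal.span_le]
    rintro q ⟨f, hfP, hf0, μ, ⟨hμsup, hlead⟩, rfl⟩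
    by_cases hstd : Std n r μ
    · exfalso
      obtain ⟨ν, hνsup, hνne, hνwt⟩ := exists_partner k ((mem_Pideal k).mp hfP) hμsup
      exact std_min n r hn hr hstd hνwt (hlead ν hνsup hνne)
    · obtain ⟨g, hgen, e, hμ⟩ := nonStd_decomp hstd
      have : (monomial μ (1:k)) = monomial g 1 * monomial e 1 := by
        rw [monomial_mul, one_mul, ← hμ]
      rw [this]
      exact Ideal.mul_mem_right _ _ (Ideal.subset_span (genOf_mem_M k n r hgen))
  · rw [Ideal.span_le, InitialIdeal]
    exact fun q hq => Ideal.subset_span (M_sub_init k n r hn hr hq)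

lemma not_dvd_X3 (a b c : ℕ) :
    ¬ ((X 3 : MvPolynomial (Fin 4) k) ∣ (X 0 ^ a * X 1 ^ b * X 2 ^ c)) := by
  rintro ⟨t, ht⟩
  have h := congrArg (eval (fun i : Fin 4 => if i = 3 then (0:k) else 1)) ht
  rw [eval_mul, eval_mul, eval_mul, eval_pow, eval_pow, eval_pow, eval_X, eval_X, eval_X,
    eval_X, if_neg (by decide), if_neg (by decide), if_neg (by decide), if_pos rfl,
    one_pow, one_pow, one_pow, zero_mul, one_mul, one_mul] at h
  exact one_ne_zero h

lemma M_not_dvd (n r : ℕ) : ∀ q ∈ Mset k n r, ¬ ((X 3 : MvPolynomial (Fin 4) k) ∣ q) := by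
  intro q hq
  rcases hq with h | ⟨i, h1, h2, h⟩ | ⟨j, h1, h⟩ | ⟨j, h1, h⟩ | h | h | h
  · rw [h, show (X 1 * X 2 ^ 3 : MvPolynomial (Fin 4) k) = X 0 ^ 0 * X 1 ^ 1 * X 2 ^ 3 by ring]
    exact not_dvd_X3 k 0 1 3
  · rw [h, show (X 0 ^ (n-i) * X 2 ^ (3*i-1) : MvPolynomial (Fin 4) k)
      = X 0 ^ (n-i) * X 1 ^ 0 * X 2 ^ (3*i-1) by ring]
    exact not_dvd_X3 k _ _ _
  · rw [h, show (X 0 ^ (r-n+3+j) * X 1 ^ (n-1-j) : MvPolynomial (Fin 4) k)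
      = X 0 ^ (r-n+3+j) * X 1 ^ (n-1-j) * X 2 ^ 0 by ring]
    exact not_dvd_X3 k _ _ _
  · rw [h, show (X 0 ^ (r-2*n+3+j) * X 1 ^ (2*n-j) : MvPolynomial (Fin 4) k)
      = X 0 ^ (r-2*n+3+j) * X 1 ^ (2*n-j) * X 2 ^ 0 by ring]
    exact not_dvd_X3 k _ _ _
  · rw [h, show (X 0 ^ (r-n+2) * X 1 ^ n * X 2 : MvPolynomial (Fin 4) k)
      = X 0 ^ (r-n+2) * X 1 ^ n * X 2 ^ 1 by ring]
    exact not_dvd_X3 k _ _ _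
  · rw [h, show (X 1 ^ (n+1) * X 2 : MvPolynomial (Fin 4) k)
      = X 0 ^ 0 * X 1 ^ (n+1) * X 2 ^ 1 by ring]
    exact not_dvd_X3 k _ _ _
  · rw [h, show (X 1 ^ (2*n+1) : MvPolynomial (Fin 4) k)
      = X 0 ^ 0 * X 1 ^ (2*n+1) * X 2 ^ 0 by ring]
    exact not_dvd_X3 k _ _ _

end
end Backelin

theorem backelin_initial_ideal
    (k : Type*) [Field k] (n r : ℕ) (hn : 2 ≤ n) (hr : 3 * n + 2 ≤ r) :
    letI s : ℕ := r * (3 * n + 2) + 3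
    letI P : Ideal (MvPolynomial (Fin 4) k) :=
      RingHom.ker (aeval (R := k)
        ![(Polynomial.X : Polynomial k) ^ s, Polynomial.X ^ (s + 3),
          Polynomial.X ^ (s + 3 * n + 1), Polynomial.X ^ (s + 3 * n + 2)]).toRingHom
    letI x₁ : MvPolynomial (Fin 4) k := X 0
    letI x₂ : MvPolynomial (Fin 4) k := X 1
    letI x₃ : MvPolynomial (Fin 4) k := X 2
    letI x₄ : MvPolynomial (Fin 4) k := X 3
    letI M : Set (MvPolynomial (Fin 4) k) :=
      {q | q = x₂ * x₃ ^ 3 ∨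
        (∃ i, 1 ≤ i ∧ i ≤ n ∧ q = x₁ ^ (n - i) * x₃ ^ (3 * i - 1)) ∨
        (∃ j, j ≤ n - 1 ∧ q = x₁ ^ (r - n + 3 + j) * x₂ ^ (n - 1 - j)) ∨
        (∃ j, j ≤ n - 1 ∧ q = x₁ ^ (r - 2 * n + 3 + j) * x₂ ^ (2 * n - j)) ∨
        q = x₁ ^ (r - n + 2) * x₂ ^ n * x₃ ∨
        q = x₂ ^ (n + 1) * x₃ ∨
        q = x₂ ^ (2 * n + 1)}
    InitialIdeal (DegRevLexLT (id : Fin 4 → Fin 4)) P = Ideal.span M ∧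
      ∀ q ∈ M, ¬ x₄ ∣ q := by
  exact ⟨Backelin.init_eq_span k n r hn hr, Backelin.M_not_dvd k n r⟩
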